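/- Let q ≥ 0 and p ∈ ℝ. Every positive classical solution u of Δu + |∇u|^q u^p = 0 on all of ℝ² is constant. -/

import Mathlib

open scoped BigOperators

/-- The Euclidean Laplacian of `u : ℝⁿ → ℝ`, defined as the sum of the second
partial derivatives in the coordinate directions. -/
noncomputable def elaplacian {n : ℕ} (u : EuclideanSpace ℝ (Fin n) → ℝ)
    (x : EuclideanSpace ℝ (Fin n)) : ℝ :=
  ∑ i : Fin n, fderiv ℝ (fun y => fderiv ℝ u y (EuclideanSpace.single i 1)) x
    (EuclideanSpace.single i 1)

set_option maxHeartbeats 1000000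
open Metric Filter Topology

variable {n : ℕ}

/-- compute elaplacian from eventual formulas for first partials and HasFDerivAt for them -/
lemma elaplacian_eq {f : EuclideanSpace ℝ (Fin n) → ℝ} {x : EuclideanSpace ℝ (Fin n)}
    {g : Fin n → EuclideanSpace ℝ (Fin n) → ℝ}
    {M : Fin n → EuclideanSpace ℝ (Fin n) →L[ℝ] ℝ}
    (hfg : ∀ i, (fun y => fderiv ℝ f y (EuclideanSpace.single i 1)) =ᶠ[𝓝 x] g i)
    (hM : ∀ i, HasFDerivAt (g i) (M i) x) :
    elaplacian f x = ∑ i, M i (EuclideanSpace.single i 1) := by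
  unfold elaplacian
  refine Finset.sum_congr rfl fun i _ => ?_
  rw [Filter.EventuallyEq.fderiv_eq (hfg i), (hM i).fderiv]

/-- sum of squares of coordinates -/
def sq2 (c y : EuclideanSpace ℝ (Fin n)) : ℝ := ∑ j : Fin n, (y j - c j) ^ 2

lemma sq2_nonneg (c y : EuclideanSpace ℝ (Fin n)) : 0 ≤ sq2 c y :=
  Finset.sum_nonneg fun _ _ => sq_nonneg _

lemma sq2_eq_dist (c y : EuclideanSpace ℝ (Fin n)) : sq2 c y = dist y c ^ 2 := by
  rw [EuclideanSpace.dist_eq, Real.sq_sqrt (Finset.sum_nonneg fun _ _ => sq_nonneg _)]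
  simp [sq2, Real.dist_eq, sq_abs]

lemma sq2_contDiff (c : EuclideanSpace ℝ (Fin n)) : ContDiff ℝ ⊤ (sq2 c) := by
  apply ContDiff.sum fun j _ => ?_
  exact ((EuclideanSpace.proj (𝕜 := ℝ) j).contDiff.sub contDiff_const).pow 2

lemma sq2_hasFDerivAt (c x : EuclideanSpace ℝ (Fin n)) :
    HasFDerivAt (sq2 c) (∑ j : Fin n, (2 * (x j - c j)) • (EuclideanSpace.proj (𝕜 := ℝ) j)) x := by
  apply HasFDerivAt.fun_sum fun j _ => ?_
  have h1 : HasFDerivAt (fun y : EuclideanSpace ℝ (Fin n) => y j - c j)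
      (EuclideanSpace.proj (𝕜 := ℝ) j) x :=
    (EuclideanSpace.proj (𝕜 := ℝ) j).hasFDerivAt.sub_const _
  have h2 := h1.mul h1
  have : (fun y : EuclideanSpace ℝ (Fin n) => (y j - c j) ^ 2)
      = fun y => (y j - c j) * (y j - c j) := by funext y; ring
  rw [this]
  rw [two_mul, add_smul]
  exact h2

lemma proj_single (i j : Fin n) :
    (EuclideanSpace.proj (𝕜 := ℝ) j) (EuclideanSpace.single i (1:ℝ)) = if j = i then 1 else 0 := by
  simp [EuclideanSpace.single_apply]

lemma sq2_fderiv_apply (c x : EuclideanSpace ℝ (Fin n)) (i : Fin n) :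
    fderiv ℝ (sq2 c) x (EuclideanSpace.single i 1) = 2 * (x i - c i) := by
  rw [(sq2_hasFDerivAt c x).fderiv]
  simp only [ContinuousLinearMap.coe_sum', Finset.sum_apply, ContinuousLinearMap.coe_smul',
    Pi.smul_apply, proj_single, smul_eq_mul]
  simp [Finset.sum_ite_eq]

abbrev E2 := EuclideanSpace ℝ (Fin 2)

lemma sum_proj_apply (a : Fin n → ℝ) (i : Fin n) :
    (∑ j : Fin n, a j • (EuclideanSpace.proj (𝕜 := ℝ) j)) (EuclideanSpace.single i 1) = a i := by
  simp only [ContinuousLinearMap.coe_sum', Finset.sum_apply, ContinuousLinearMap.coe_smul',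
    Pi.smul_apply, proj_single, smul_eq_mul]
  simp [Finset.sum_ite_eq']

lemma psi_contDiff {u : EuclideanSpace ℝ (Fin n) → ℝ} (hu : ContDiff ℝ 2 u) (i : Fin n) :
    ContDiff ℝ 1 (fun y => fderiv ℝ u y (EuclideanSpace.single i 1)) := by
  exact (hu.fderiv_right (le_refl 2)).clm_apply contDiff_const

/-- Laplacian of `u - δ * sq2 c` -/
lemma elap_A {u : E2 → ℝ} (hu : ContDiff ℝ 2 u) (c : E2) (δ : ℝ) (x : E2) :
    elaplacian (fun y => u y - δ * sq2 c y) x = elaplacian u x - 4 * δ := by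
  have hud : Differentiable ℝ u := hu.differentiable two_ne_zero
  have hfg : ∀ i : Fin 2, (fun y => fderiv ℝ (fun z => u z - δ * sq2 c z) y
      (EuclideanSpace.single i 1)) =ᶠ[𝓝 x]
      (fun y => fderiv ℝ u y (EuclideanSpace.single i 1) - (2 * δ) * (y i - c i)) := by
    intro i
    refine Filter.Eventually.of_forall fun y => ?_
    have h : HasFDerivAt (fun z => u z - δ * sq2 c z)
        (fderiv ℝ u y - δ • (∑ j : Fin 2, (2 * (y j - c j)) • (EuclideanSpace.proj (𝕜 := ℝ) j))) y :=
      (hud y).hasFDerivAt.sub ((sq2_hasFDerivAt c y).const_mul δ)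
    beta_reduce
    rw [h.fderiv]
    simp only [ContinuousLinearMap.coe_sub', Pi.sub_apply, ContinuousLinearMap.coe_smul',
      Pi.smul_apply, smul_eq_mul, sum_proj_apply]
    ring
  have hM : ∀ i : Fin 2, HasFDerivAt
      (fun y => fderiv ℝ u y (EuclideanSpace.single i 1) - (2 * δ) * (y i - c i))
      (fderiv ℝ (fun y => fderiv ℝ u y (EuclideanSpace.single i 1)) x
        - (2 * δ) • (EuclideanSpace.proj (𝕜 := ℝ) i)) x := by
    intro i
    have h1 : HasFDerivAt (fun y : E2 => y i - c i) (EuclideanSpace.proj (𝕜 := ℝ) i) x :=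
      (EuclideanSpace.proj (𝕜 := ℝ) i).hasFDerivAt.sub_const _
    exact (((psi_contDiff hu i).differentiable one_ne_zero) x).hasFDerivAt.sub (h1.const_mul _)
  rw [elaplacian_eq hfg hM]
  simp only [ContinuousLinearMap.coe_sub', Pi.sub_apply, ContinuousLinearMap.coe_smul',
    Pi.smul_apply, smul_eq_mul, proj_single]
  norm_num
  unfold elaplacian
  rw [Fin.sum_univ_two]
  ring

/-- Laplacian of `u + ε * log (sq2 c) - δ * sq2 c` away from `c` -/
lemma elap_B {u : E2 → ℝ} (hu : ContDiff ℝ 2 u) (c : E2) (ε δ : ℝ) (x : E2)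
    (hx : sq2 c x ≠ 0) :
    elaplacian (fun y => u y + ε * Real.log (sq2 c y) - δ * sq2 c y) x
      = elaplacian u x - 4 * δ := by
  have hud : Differentiable ℝ u := hu.differentiable two_ne_zero
  have hcont : Continuous (sq2 c) := (sq2_contDiff c).continuous
  set L : E2 → (E2 →L[ℝ] ℝ) :=
    fun y => ∑ j : Fin 2, (2 * (y j - c j)) • (EuclideanSpace.proj (𝕜 := ℝ) j) with hL
  have hfg : ∀ i : Fin 2, (fun y => fderiv ℝ (fun z => u z + ε * Real.log (sq2 c z) - δ * sq2 c z) y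
      (EuclideanSpace.single i 1)) =ᶠ[𝓝 x]
      (fun y => fderiv ℝ u y (EuclideanSpace.single i 1)
        + ε * (2 * (y i - c i) * (sq2 c y)⁻¹) - (2 * δ) * (y i - c i)) := by
    intro i
    filter_upwards [hcont.continuousAt.eventually_ne hx] with y hy
    have hlog : HasFDerivAt (fun z => Real.log (sq2 c z)) ((sq2 c y)⁻¹ • L y) y := by
      have := (Real.hasDerivAt_log hy).comp_hasFDerivAt y (sq2_hasFDerivAt c y)
      exact this
    have h : HasFDerivAt (fun z => u z + ε * Real.log (sq2 c z) - δ * sq2 c z)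
        ((fderiv ℝ u y + ε • ((sq2 c y)⁻¹ • L y)) - δ • L y) y :=
      ((hud y).hasFDerivAt.add (hlog.const_mul ε)).sub ((sq2_hasFDerivAt c y).const_mul δ)
    beta_reduce
    rw [h.fderiv]
    simp only [ContinuousLinearMap.coe_sub', Pi.sub_apply, ContinuousLinearMap.coe_add',
      Pi.add_apply, ContinuousLinearMap.coe_smul', Pi.smul_apply, smul_eq_mul, hL, sum_proj_apply]
    ring
  have hM : ∀ i : Fin 2, HasFDerivAt
      (fun y => fderiv ℝ u y (EuclideanSpace.single i 1)
        + ε * (2 * (y i - c i) * (sq2 c y)⁻¹) - (2 * δ) * (y i - c i))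
      ((fderiv ℝ (fun y => fderiv ℝ u y (EuclideanSpace.single i 1)) x
        + ε • ((2 * (x i - c i)) • ((-((sq2 c x) ^ 2)⁻¹) • L x)
              + (sq2 c x)⁻¹ • ((2:ℝ) • EuclideanSpace.proj (𝕜 := ℝ) i)))
        - (2 * δ) • (EuclideanSpace.proj (𝕜 := ℝ) i)) x := by
    intro i
    have h1 : HasFDerivAt (fun y : E2 => y i - c i) (EuclideanSpace.proj (𝕜 := ℝ) i) x :=
      (EuclideanSpace.proj (𝕜 := ℝ) i).hasFDerivAt.sub_const _
    have hN : HasFDerivAt (fun y : E2 => 2 * (y i - c i)) ((2:ℝ) • EuclideanSpace.proj (𝕜 := ℝ) i)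
        x := h1.const_mul 2
    have hI : HasFDerivAt (fun y : E2 => (sq2 c y)⁻¹) ((-((sq2 c x) ^ 2)⁻¹) • L x) x := by
      have := (hasDerivAt_inv hx).comp_hasFDerivAt x (sq2_hasFDerivAt c x)
      exact this
    have hprod := hN.mul hI
    exact ((((psi_contDiff hu i).differentiable one_ne_zero) x).hasFDerivAt.add
      (hprod.const_mul ε)).sub (h1.const_mul _)
  rw [elaplacian_eq hfg hM]
  have hs : sq2 c x = (x 0 - c 0) ^ 2 + (x 1 - c 1) ^ 2 := by
    simp [sq2, Fin.sum_univ_two]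
  simp only [ContinuousLinearMap.coe_sub', Pi.sub_apply, ContinuousLinearMap.coe_add',
    Pi.add_apply, ContinuousLinearMap.coe_smul', Pi.smul_apply, smul_eq_mul, hL,
    sum_proj_apply, proj_single]
  norm_num
  unfold elaplacian
  rw [Fin.sum_univ_two]
  rw [hs] at hx ⊢
  field_simp
  ring

lemma second_test_1d {g φ : ℝ → ℝ} {cc : ℝ}
    (hg : ∀ᶠ t in 𝓝 (0:ℝ), HasDerivAt g (φ t) t)
    (hφ : HasDerivAt φ cc 0) (hmin : IsLocalMin g 0) : 0 ≤ cc := by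
  by_contra hc
  push_neg at hc
  have hφ0 : φ 0 = 0 := by
    have h1 : HasDerivAt g (φ 0) 0 := hg.self_of_nhds
    have h2 : deriv g 0 = 0 := hmin.deriv_eq_zero
    rw [← h1.deriv, h2]
  have hslope : Tendsto (slope φ 0) (𝓝[≠] (0:ℝ)) (𝓝 cc) :=
    hasDerivAt_iff_tendsto_slope.mp hφ
  have hev : ∀ᶠ t in 𝓝[≠] (0:ℝ), slope φ 0 t < 0 :=
    hslope.eventually (eventually_lt_nhds hc)
  rw [eventually_nhdsWithin_iff] at hev
  have hmin' : ∀ᶠ t in 𝓝 (0:ℝ), g 0 ≤ g t := hmin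
  have hall := (hg.and hmin').and hev
  rw [Metric.eventually_nhds_iff] at hall
  obtain ⟨δ, hδ, hδall⟩ := hall
  set t := δ / 2 with ht
  have htpos : 0 < t := by positivity
  have hmem : ∀ s : ℝ, s ∈ Set.Icc (0:ℝ) t → dist s 0 < δ := by
    intro s hs
    rw [Real.dist_eq, sub_zero, abs_of_nonneg hs.1]
    linarith [hs.2]
  have hcont : ContinuousOn g (Set.Icc 0 t) := fun s hs =>
    ((hδall (hmem s hs)).1.1.continuousAt).continuousWithinAt
  have hderiv : ∀ s ∈ Set.Ioo (0:ℝ) t, HasDerivAt g (φ s) s := fun s hs =>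
    (hδall (hmem s ⟨le_of_lt hs.1, le_of_lt hs.2⟩)).1.1
  obtain ⟨ζ, hζ, hζeq⟩ := exists_hasDerivAt_eq_slope g φ htpos hcont hderiv
  have h1 : g 0 ≤ g t := (hδall (hmem t ⟨le_of_lt htpos, le_refl t⟩)).1.2
  have h2 : slope φ 0 ζ < 0 :=
    (hδall (hmem ζ ⟨le_of_lt hζ.1, le_of_lt hζ.2⟩)).2 (ne_of_gt hζ.1)
  rw [slope_def_field, hφ0] at h2
  have h3 : φ ζ < 0 := by
    have := div_neg_iff.mp (by simpa using h2)
    rcases this with ⟨h, _⟩ | ⟨_, h⟩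
    · linarith [hζ.1]
    · linarith [hζ.1, h]
  rw [hζeq] at h3
  have h4 : 0 < t := htpos
  have : (g t - g 0) / (t - 0) ≥ 0 := by
    apply div_nonneg (by linarith) (by linarith)
  linarith

lemma elaplacian_nonneg_of_isLocalMin {f : E2 → ℝ} {x : E2}
    (hf : ContDiffAt ℝ 2 f x) (hmin : IsLocalMin f x) : 0 ≤ elaplacian f x := by
  -- eventual differentiability
  obtain ⟨U, hU, hfU⟩ := hf.contDiffOn (le_refl 2) (by norm_num)
  have hev : ∀ᶠ y in 𝓝 x, DifferentiableAt ℝ f y := by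
    filter_upwards [interior_mem_nhds.mpr hU] with y hy
    exact (hfU.contDiffAt (mem_interior_iff_mem_nhds.mp hy)).differentiableAt two_ne_zero
  apply Finset.sum_nonneg
  intro i _
  set e : E2 := EuclideanSpace.single i 1 with he
  set ψ : E2 → ℝ := fun y => fderiv ℝ f y e with hψ
  have hψd : DifferentiableAt ℝ ψ x :=
    ((hf.fderiv_right (le_refl 2)).clm_apply contDiffAt_const).differentiableAt one_ne_zero
  set ℓ : ℝ → E2 := fun t => x + t • e with hℓ
  have hℓ0 : ℓ 0 = x := by simp [hℓ]
  have hℓc : Continuous ℓ := continuous_const.add (continuous_id.smul continuous_const)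
  have hℓt : Tendsto ℓ (𝓝 0) (𝓝 x) := by
    rw [← hℓ0]; exact hℓc.tendsto 0
  have hline : ∀ t : ℝ, HasDerivAt ℓ e t := by
    intro t
    have : HasDerivAt (fun s : ℝ => s • e) ((1:ℝ) • e) t := (hasDerivAt_id t).smul_const e
    simpa [hℓ] using this.const_add x
  have hg : ∀ᶠ t in 𝓝 (0:ℝ), HasDerivAt (f ∘ ℓ) (ψ (ℓ t)) t := by
    filter_upwards [hℓt.eventually hev] with t hdt
    exact hdt.hasFDerivAt.comp_hasDerivAt t (hline t)
  have hφ : HasDerivAt (ψ ∘ ℓ) (fderiv ℝ ψ x e) 0 := by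
    have hψd' : DifferentiableAt ℝ ψ (ℓ 0) := by rwa [hℓ0]
    have h := hψd'.hasFDerivAt.comp_hasDerivAt 0 (hline 0)
    rwa [hℓ0] at h
  have hgm : IsLocalMin (f ∘ ℓ) 0 := by
    have : ∀ᶠ t in 𝓝 (0:ℝ), f x ≤ f (ℓ t) := hℓt.eventually hmin
    simpa [IsLocalMin, IsMinFilter, hℓ0] using this
  have := second_test_1d (g := f ∘ ℓ) (φ := ψ ∘ ℓ) hg hφ hgm
  simpa [hψ] using this

lemma le_helper {a b C : ℝ} (hC : 0 ≤ C) (h : ∀ ε > 0, b - ε * C ≤ a) : b ≤ a := by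
  have h' : ∀ ε > 0, b ≤ a + ε := by
    intro ε hε
    have h1 := h (ε / (C + 1)) (by positivity)
    have h2 : (ε / (C + 1)) * C ≤ ε := by
      rw [div_mul_eq_mul_div, div_le_iff₀ (by linarith)]
      nlinarith
    linarith
  exact le_of_forall_pos_le_add h'

lemma claimA {u : E2 → ℝ} (hu : ContDiff ℝ 2 u)
    (hpos : ∀ x, 0 < u x) (hΔ : ∀ x, elaplacian u x ≤ 0)
    (c : E2) (r : ℝ) (hr : 0 < r) (m : ℝ)
    (hm : ∀ y, dist y c = r → m ≤ u y) (x : E2) : m ≤ u x := by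
  have hsq2c : ContDiff ℝ 2 (sq2 c) := (sq2_contDiff c).of_le le_top
  rcases le_or_gt (dist x c) r with hcase | hcase
  · -- inside the closed ball
    refine le_helper (C := r ^ 2) (by positivity) fun δ hδ => ?_
    set v : E2 → ℝ := fun y => u y - δ * sq2 c y with hv
    have hvC : ContDiff ℝ 2 v := hu.sub (contDiff_const.mul hsq2c)
    obtain ⟨y₀, hy₀K, hy₀min⟩ := (isCompact_closedBall c r).exists_isMinOn
      ⟨x, Metric.mem_closedBall.mpr hcase⟩ hvC.continuous.continuousOn
    have hy₀r : dist y₀ c = r := by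
      by_contra hne
      have hball : y₀ ∈ Metric.ball c r :=
        Metric.mem_ball.mpr (lt_of_le_of_ne (Metric.mem_closedBall.mp hy₀K) hne)
      have hnhds : Metric.closedBall c r ∈ 𝓝 y₀ :=
        Filter.mem_of_superset (Metric.isOpen_ball.mem_nhds hball) Metric.ball_subset_closedBall
      have hloc : IsLocalMin v y₀ := hy₀min.isLocalMin hnhds
      have h0 := elaplacian_nonneg_of_isLocalMin hvC.contDiffAt hloc
      rw [elap_A hu c δ y₀] at h0
      linarith [hΔ y₀]
    have h1 : v y₀ ≤ v x := hy₀min (Metric.mem_closedBall.mpr hcase)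
    have h2 : sq2 c y₀ = r ^ 2 := by rw [sq2_eq_dist, hy₀r]
    have h3 : 0 ≤ sq2 c x := sq2_nonneg c x
    have h4 : m ≤ u y₀ := hm y₀ hy₀r
    have h5 : sq2 c x ≤ r ^ 2 := by
      rw [sq2_eq_dist]; exact pow_le_pow_left₀ dist_nonneg hcase 2
    simp only [hv] at h1
    nlinarith
  · -- outside: annulus argument
    set d : ℝ := dist x c with hd
    have hd0 : 0 < d := lt_trans hr hcase
    have hC0 : 0 ≤ Real.log (d ^ 2) - Real.log (r ^ 2) := by
      have := Real.log_le_log (by positivity) (pow_le_pow_left₀ hr.le hcase.le 2)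
      linarith
    refine le_helper hC0 fun ε hε => ?_
    set R : ℝ := (d + 1) * Real.exp (|m| / (2 * ε)) with hR
    have hexp1 : (1:ℝ) ≤ Real.exp (|m| / (2 * ε)) :=
      Real.one_le_exp (by positivity)
    have hdR : d + 1 ≤ R := by
      nlinarith
    have hR0 : 0 < R := by nlinarith
    have hrR : r ≤ R := by nlinarith
    -- key: ε * (log R² - log d²) ≥ m
    have hkey : m ≤ ε * (Real.log (R ^ 2) - Real.log (d ^ 2)) := by
      have hlR : Real.log R = Real.log (d + 1) + |m| / (2 * ε) := by
        rw [hR, Real.log_mul (by linarith) (Real.exp_ne_zero _), Real.log_exp]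
      have hld : Real.log d ≤ Real.log (d + 1) := Real.log_le_log hd0 (by linarith)
      have h2R : Real.log (R ^ 2) = 2 * Real.log R := by
        rw [Real.log_pow]; norm_num
      have h2d : Real.log (d ^ 2) = 2 * Real.log d := by
        rw [Real.log_pow]; norm_num
      have habs : m ≤ |m| := le_abs_self m
      have : |m| / (2 * ε) * (2 * ε) = |m| := div_mul_cancel₀ _ (by positivity)
      nlinarith
    refine le_helper (C := R ^ 2) (by positivity) fun δ hδ => ?_
    set v : E2 → ℝ := fun y => u y + ε * Real.log (sq2 c y) - δ * sq2 c y with hv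
    set K : Set E2 := Metric.closedBall c R \ Metric.ball c r with hK
    have hKc : IsCompact K := (isCompact_closedBall c R).diff Metric.isOpen_ball
    have hxK : x ∈ K := by
      constructor
      · exact Metric.mem_closedBall.mpr (by nlinarith)
      · simp only [Metric.mem_ball, not_lt]; exact hcase.le
    have hKne : ∀ y ∈ K, sq2 c y ≠ 0 := by
      intro y hy
      have : r ≤ dist y c := not_lt.mp (fun h => hy.2 (Metric.mem_ball.mpr h))
      rw [sq2_eq_dist]
      nlinarith
    have hvcont : ContinuousOn v K := by
      apply ContinuousOn.sub
      · exact (hu.continuous.continuousOn).add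
          (continuousOn_const.mul (((sq2_contDiff c).continuous.continuousOn).log hKne))
      · exact continuousOn_const.mul (sq2_contDiff c).continuous.continuousOn
    obtain ⟨y₀, hy₀K, hy₀min⟩ := hKc.exists_isMinOn ⟨x, hxK⟩ hvcont
    have hy₀le : dist y₀ c ≤ R := Metric.mem_closedBall.mp hy₀K.1
    have hy₀ge : r ≤ dist y₀ c := not_lt.mp (fun h => hy₀K.2 (Metric.mem_ball.mpr h))
    have hy₀bd : dist y₀ c = r ∨ dist y₀ c = R := by
      by_contra hne
      push_neg at hne
      have hlt1 : r < dist y₀ c := lt_of_le_of_ne hy₀ge (Ne.symm hne.1)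
      have hlt2 : dist y₀ c < R := lt_of_le_of_ne hy₀le hne.2
      have hW : y₀ ∈ Metric.ball c R \ Metric.closedBall c r :=
        ⟨Metric.mem_ball.mpr hlt2, by simp only [Metric.mem_closedBall, not_le]; exact hlt1⟩
      have hWopen : IsOpen (Metric.ball c R \ Metric.closedBall c r) :=
        Metric.isOpen_ball.sdiff Metric.isClosed_closedBall
      have hWK : Metric.ball c R \ Metric.closedBall c r ⊆ K := fun z hz =>
        ⟨Metric.ball_subset_closedBall hz.1, fun h =>
          hz.2 (Metric.ball_subset_closedBall h)⟩
      have hnhds : K ∈ 𝓝 y₀ :=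
        Filter.mem_of_superset (hWopen.mem_nhds hW) hWK
      have hloc : IsLocalMin v y₀ := hy₀min.isLocalMin hnhds
      have hsne : sq2 c y₀ ≠ 0 := hKne y₀ hy₀K
      have hvC : ContDiffAt ℝ 2 v y₀ := by
        apply ContDiffAt.sub
        · exact (hu.contDiffAt).add (contDiffAt_const.mul
            ((Real.contDiffAt_log.mpr hsne).comp y₀ hsq2c.contDiffAt))
        · exact contDiffAt_const.mul hsq2c.contDiffAt
      have h0 := elaplacian_nonneg_of_isLocalMin hvC hloc
      rw [elap_B hu c ε δ y₀ hsne] at h0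
      linarith [hΔ y₀]
    have h1 : v y₀ ≤ v x := hy₀min hxK
    have hsx : sq2 c x = d ^ 2 := by rw [sq2_eq_dist]
    have hsx0 : 0 ≤ sq2 c x := sq2_nonneg c x
    -- v x = u x + ε log d² - δ d² ;  u x ≥ v x - ε log d²  (since δ sq2 ≥ 0)
    have hvx : v x ≤ u x + ε * Real.log (d ^ 2) := by
      simp only [hv, hsx]
      nlinarith
    rcases hy₀bd with hbd | hbd
    · have hs0 : sq2 c y₀ = r ^ 2 := by rw [sq2_eq_dist, hbd]
      have h4 : m ≤ u y₀ := hm y₀ hbd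
      have hv0 : m + ε * Real.log (r ^ 2) - δ * r ^ 2 ≤ v y₀ := by
        simp only [hv, hs0]; nlinarith
      nlinarith [mul_le_mul_of_nonneg_left (pow_le_pow_left₀ hr.le hrR 2) hδ.le]
    · have hs0 : sq2 c y₀ = R ^ 2 := by rw [sq2_eq_dist, hbd]
      have h4 : 0 ≤ u y₀ := (hpos y₀).le
      have hv0 : ε * Real.log (R ^ 2) - δ * R ^ 2 ≤ v y₀ := by
        simp only [hv, hs0]; nlinarith
      nlinarith

/-- **Theorem 1.1, case (1).** For `q ≥ 0` and `p ∈ ℝ`, every positive classical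
solution of `Δu + |∇u|^q u^p = 0` on all of `ℝ²` is constant. -/
theorem liouville_dim_two (p q : ℝ) (hq : 0 ≤ q)
    (u : EuclideanSpace ℝ (Fin 2) → ℝ)
    (hu : ContDiff ℝ 2 u)
    (hpos : ∀ x, 0 < u x)
    (heq : ∀ x, elaplacian u x + ‖gradient u x‖ ^ q * u x ^ p = 0) :
    ∀ x y, u x = u y := by
  have hΔ : ∀ x, elaplacian u x ≤ 0 := by
    intro x
    have h := heq x
    have h1 : 0 ≤ ‖gradient u x‖ ^ q * u x ^ p :=
      mul_nonneg (Real.rpow_nonneg (norm_nonneg _) q) (Real.rpow_pos_of_pos (hpos x) p).le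
    linarith
  have key : ∀ x y, u y ≤ u x := by
    intro x y
    apply le_of_forall_pos_le_add
    intro ε hε
    obtain ⟨rr, hrr, hcont⟩ :=
      Metric.continuousAt_iff.mp (hu.continuous.continuousAt (x := y)) ε hε
    have hm : ∀ z, dist z y = rr / 2 → u y - ε ≤ u z := by
      intro z hz
      have h1 : dist z y < rr := by rw [hz]; linarith
      have h2 := hcont h1
      rw [Real.dist_eq, abs_lt] at h2
      linarith [h2.1]
    have := claimA hu hpos hΔ y (rr / 2) (by linarith) (u y - ε) hm x
    linarith
  intro x y
  exact le_antisymm (key y x) (key x y)
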